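/- Let K be a field with a non-Archimedean absolute value, let (a_n) be a sequence in K and (r_n) a strictly decreasing sequence of positive reals such that the closed disks are nested, i.e. r_{n+1} ≤ r_n and |a_{n+1} − a_n| ≤ r_n for all n. Then for every f ∈ K[X] the sequence n ↦ ‖f‖_{a_n,r_n} is nonincreasing, so the limit ‖f‖ := lim_{n→∞} ‖f‖_{a_n,r_n} exists, and the resulting function f ↦ ‖f‖ is a multiplicative seminorm on K[X] extending |·|. -/

import Mathlib

open Polynomial Filter

/-- A non-Archimedean absolute value on a field `K`. -/
def IsNonarchAbs {K : Type*} [Field K] (abv : K → ℝ) : Prop :=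
  (∀ x, 0 ≤ abv x) ∧ (∀ x, abv x = 0 ↔ x = 0) ∧
  (∀ x y, abv (x * y) = abv x * abv y) ∧
  (∀ x y, abv (x + y) ≤ max (abv x) (abv y))

/-- The Gauss seminorm `‖f‖_{a,r} = max_i |c_i| r^i` where `f(X+a) = Σ c_i X^i`. -/
noncomputable def gaussSN {K : Type*} [Field K] (abv : K → ℝ) (a : K) (r : ℝ)
    (f : Polynomial K) : ℝ :=
  ⨆ i : ℕ, abv ((f.comp (X + C a)).coeff i) * r ^ i

/-- A multiplicative seminorm on `K[X]` extending the absolute value `abv`. -/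
def IsMultSeminorm {K : Type*} [Field K] (abv : K → ℝ) (N : Polynomial K → ℝ) : Prop :=
  (∀ f, 0 ≤ N f) ∧ (∀ c : K, N (C c) = abv c) ∧
  (∀ f g, N (f + g) ≤ N f + N g) ∧ (∀ f g, N (f * g) = N f * N g)

section aux

variable {K : Type*} [Field K] {abv : K → ℝ} (habv : IsNonarchAbs abv)
include habv

lemma ab_zero : abv 0 = 0 := (habv.2.1 0).2 rfl

lemma ab_one : abv 1 = 1 := by
  have h := habv.2.2.1 1 1
  rw [one_mul] at h
  have h1 : abv 1 ≠ 0 := fun h0 => one_ne_zero ((habv.2.1 1).1 h0)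
  exact mul_left_cancel₀ h1 (by rw [mul_one]; exact h.symm)

lemma ab_neg (y : K) : abv (-y) = abv y := by
  have hm1 : abv (-1 : K) = 1 := by
    have h2 := habv.2.2.1 (-1) (-1)
    simp only [neg_mul_neg, one_mul] at h2
    rw [ab_one habv] at h2
    have hne : abv (-1 : K) ≠ 0 := fun h0 => by
      simpa using (habv.2.1 (-1)).1 h0
    nlinarith [habv.1 (-1 : K)]
  have h1 := habv.2.2.1 (-1) y
  rw [neg_one_mul] at h1
  rw [h1, hm1, one_mul]

lemma ab_pow (x : K) (n : ℕ) : abv (x ^ n) = abv x ^ n := by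
  induction n with
  | zero => simpa using ab_one habv
  | succ n ih => rw [pow_succ, pow_succ, habv.2.2.1, ih]

lemma ab_nat (n : ℕ) : abv (n : K) ≤ 1 := by
  induction n with
  | zero => simp [ab_zero habv]
  | succ n ih =>
    push_cast
    exact le_trans (habv.2.2.2 _ _) (max_le ih (le_of_eq (ab_one habv)))

lemma ab_sum_le {ι : Type*} (s : Finset ι) (f : ι → K) {C : ℝ} (hC : 0 ≤ C)
    (h : ∀ i ∈ s, abv (f i) ≤ C) : abv (∑ i ∈ s, f i) ≤ C := by
  induction s using Finset.cons_induction with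
  | empty => simpa [ab_zero habv] using hC
  | cons a s ha ih =>
    rw [Finset.sum_cons]
    refine le_trans (habv.2.2.2 _ _) (max_le (h a (Finset.mem_cons_self a s)) ?_)
    exact ih fun i hi => h i (Finset.mem_cons_of_mem hi)

lemma ab_sum_lt {ι : Type*} (s : Finset ι) (f : ι → K) {C : ℝ} (hC : 0 < C)
    (h : ∀ i ∈ s, abv (f i) < C) : abv (∑ i ∈ s, f i) < C := by
  induction s using Finset.cons_induction with
  | empty => simpa [ab_zero habv] using hC
  | cons a s ha ih =>
    rw [Finset.sum_cons]
    refine lt_of_le_of_lt (habv.2.2.2 _ _)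
      (max_lt (h a (Finset.mem_cons_self a s)) ?_)
    exact ih fun i hi => h i (Finset.mem_cons_of_mem hi)

lemma ab_add_eq {x y : K} (h : abv y < abv x) : abv (x + y) = abv x := by
  refine le_antisymm (le_trans (habv.2.2.2 _ _) (max_le le_rfl h.le)) ?_
  by_contra hlt
  push_neg at hlt
  have hx : abv x ≤ max (abv (x + y)) (abv (-y)) := by
    have := habv.2.2.2 (x + y) (-y)
    simpa using this
  rw [ab_neg habv] at hx
  exact absurd hx (not_le_of_gt (max_lt hlt h))


noncomputable def gsn (abv : K → ℝ) (p : Polynomial K) (r : ℝ) : ℝ :=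
  ⨆ i : ℕ, abv (p.coeff i) * r ^ i

variable {p q : Polynomial K} {r : ℝ}

lemma gsn_term_nonneg (hr : 0 ≤ r) (i : ℕ) : 0 ≤ abv (p.coeff i) * r ^ i :=
  mul_nonneg (habv.1 _) (pow_nonneg hr i)

lemma gsn_bdd (hr : 0 ≤ r) :
    BddAbove (Set.range fun i : ℕ => abv (p.coeff i) * r ^ i) := by
  refine ⟨∑ i ∈ Finset.range (p.natDegree + 1), abv (p.coeff i) * r ^ i, ?_⟩
  rintro x ⟨i, rfl⟩
  dsimp only
  by_cases hi : i ≤ p.natDegree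
  · exact Finset.single_le_sum (fun j _ => gsn_term_nonneg habv hr j)
      (Finset.mem_range.mpr (Nat.lt_succ_of_le hi))
  · push_neg at hi
    rw [coeff_eq_zero_of_natDegree_lt hi, ab_zero habv, zero_mul]
    exact Finset.sum_nonneg fun j _ => gsn_term_nonneg habv hr j

lemma le_gsn (hr : 0 ≤ r) (i : ℕ) : abv (p.coeff i) * r ^ i ≤ gsn abv p r :=
  le_ciSup (gsn_bdd habv hr) i

set_option linter.unusedSectionVars false in
lemma gsn_le {C : ℝ} (hC : 0 ≤ C) (h : ∀ i, abv (p.coeff i) * r ^ i ≤ C) :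
    gsn abv p r ≤ C := Real.iSup_le h hC

lemma gsn_nonneg (hr : 0 ≤ r) : 0 ≤ gsn abv p r :=
  le_trans (gsn_term_nonneg habv hr 0) (le_gsn habv hr 0)

lemma gsn_exists (hr : 0 ≤ r) : ∃ i, abv (p.coeff i) * r ^ i = gsn abv p r := by
  have hne : (Finset.range (p.natDegree + 1)).Nonempty := ⟨0, by simp⟩
  obtain ⟨i, hi, hsup⟩ := Finset.exists_mem_eq_sup' hne
    (fun i => abv (p.coeff i) * r ^ i)
  have hnn : 0 ≤ abv (p.coeff i) * r ^ i := gsn_term_nonneg habv hr i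
  refine ⟨i, le_antisymm (le_gsn habv hr i) (gsn_le habv hnn fun j => ?_)⟩
  by_cases hj : j ≤ p.natDegree
  · rw [← hsup]
    exact Finset.le_sup' (fun i => abv (p.coeff i) * r ^ i)
      (Finset.mem_range.mpr (Nat.lt_succ_of_le hj))
  · push_neg at hj
    rw [coeff_eq_zero_of_natDegree_lt hj, ab_zero habv, zero_mul]
    exact hnn

lemma gsn_zero : gsn abv (0 : Polynomial K) r = 0 := by
  simp [gsn, ab_zero habv]

lemma gsn_pos (hp : p ≠ 0) (hr : 0 < r) : 0 < gsn abv p r := by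
  refine lt_of_lt_of_le ?_ (le_gsn habv hr.le p.natDegree)
  have : abv p.leadingCoeff ≠ 0 := fun h =>
    hp (leadingCoeff_eq_zero.mp ((habv.2.1 _).1 h))
  exact mul_pos (lt_of_le_of_ne (habv.1 _) (Ne.symm this)) (pow_pos hr _)

lemma gsn_C (hr : 0 ≤ r) (c : K) : gsn abv (C c) r = abv c := by
  refine le_antisymm (gsn_le habv (habv.1 c) fun i => ?_)
    (by simpa using le_gsn habv hr 0 (p := C c))
  cases i with
  | zero => simp
  | succ n =>
    simp only [coeff_C, Nat.succ_ne_zero, if_false, ab_zero habv, zero_mul]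
    exact habv.1 c


lemma gsn_add_le (hr : 0 ≤ r) :
    gsn abv (p + q) r ≤ max (gsn abv p r) (gsn abv q r) := by
  refine gsn_le habv (le_max_of_le_left (gsn_nonneg habv hr)) fun i => ?_
  rw [coeff_add]
  calc abv (p.coeff i + q.coeff i) * r ^ i
      ≤ max (abv (p.coeff i)) (abv (q.coeff i)) * r ^ i :=
        mul_le_mul_of_nonneg_right (habv.2.2.2 _ _) (pow_nonneg hr i)
    _ = max (abv (p.coeff i) * r ^ i) (abv (q.coeff i) * r ^ i) :=
        max_mul_of_nonneg _ _ (pow_nonneg hr i)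
    _ ≤ _ := max_le_max (le_gsn habv hr i) (le_gsn habv hr i)

lemma gsn_mul_le (hr : 0 < r) :
    gsn abv (p * q) r ≤ gsn abv p r * gsn abv q r := by
  refine gsn_le habv (mul_nonneg (gsn_nonneg habv hr.le) (gsn_nonneg habv hr.le))
    fun n => ?_
  rw [coeff_mul, ← le_div_iff₀ (pow_pos hr n)]
  refine ab_sum_le habv _ _ (div_nonneg (mul_nonneg (gsn_nonneg habv hr.le)
    (gsn_nonneg habv hr.le)) (pow_pos hr n).le) fun ij hij => ?_
  obtain ⟨i, j⟩ := ij
  have hn : i + j = n := Finset.HasAntidiagonal.mem_antidiagonal.mp hij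
  rw [le_div_iff₀ (pow_pos hr n), habv.2.2.1]
  calc abv (p.coeff i) * abv (q.coeff j) * r ^ n
      = (abv (p.coeff i) * r ^ i) * (abv (q.coeff j) * r ^ j) := by
        rw [← hn, pow_add]; ring
    _ ≤ gsn abv p r * gsn abv q r :=
        mul_le_mul (le_gsn habv hr.le i) (le_gsn habv hr.le j)
          (gsn_term_nonneg habv hr.le j) (gsn_nonneg habv hr.le)

lemma gsn_mul (hr : 0 < r) :
    gsn abv (p * q) r = gsn abv p r * gsn abv q r := by
  rcases eq_or_ne p 0 with rfl | hp
  · simp [gsn_zero habv]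
  rcases eq_or_ne q 0 with rfl | hq
  · simp [gsn_zero habv]
  refine le_antisymm (gsn_mul_le habv hr) ?_
  classical
  set A := gsn abv p r with hA'
  set B := gsn abv q r with hB'
  have hA : 0 < A := gsn_pos habv hp hr
  have hB : 0 < B := gsn_pos habv hq hr
  have hexp : ∃ i, abv (p.coeff i) * r ^ i = A := gsn_exists habv hr.le
  have hexq : ∃ j, abv (q.coeff j) * r ^ j = B := gsn_exists habv hr.le
  set i0 := Nat.find hexp with hi0def
  set j0 := Nat.find hexq with hj0def
  have hi0 : abv (p.coeff i0) * r ^ i0 = A := Nat.find_spec hexp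
  have hj0 : abv (q.coeff j0) * r ^ j0 = B := Nat.find_spec hexq
  have hmain : abv (p.coeff i0 * q.coeff j0) = A * B / r ^ (i0 + j0) := by
    rw [habv.2.2.1, eq_div_iff (pow_pos hr _).ne', ← hi0, ← hj0, pow_add]
    ring
  have key : abv ((p * q).coeff (i0 + j0)) = A * B / r ^ (i0 + j0) := by
    rw [coeff_mul]
    have hmem : ((i0, j0) : ℕ × ℕ) ∈ Finset.HasAntidiagonal.antidiagonal (i0 + j0) :=
      Finset.HasAntidiagonal.mem_antidiagonal.mpr rfl
    rw [← Finset.add_sum_erase _ _ hmem]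
    have hrest : abv (∑ ij ∈ (Finset.HasAntidiagonal.antidiagonal (i0 + j0)).erase (i0, j0),
        p.coeff ij.1 * q.coeff ij.2) < abv (p.coeff i0 * q.coeff j0) := by
      rw [hmain]
      refine ab_sum_lt habv _ _ (div_pos (mul_pos hA hB) (pow_pos hr _))
        fun ij hij => ?_
      obtain ⟨hij1, hij2⟩ := Finset.mem_erase.mp hij
      obtain ⟨i, j⟩ := ij
      have hijn : i + j = i0 + j0 := Finset.HasAntidiagonal.mem_antidiagonal.mp hij2
      rw [lt_div_iff₀ (pow_pos hr _), habv.2.2.1]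
      have heq : abv (p.coeff i) * abv (q.coeff j) * r ^ (i0 + j0)
          = (abv (p.coeff i) * r ^ i) * (abv (q.coeff j) * r ^ j) := by
        rw [← hijn, pow_add]; ring
      rw [heq]
      rcases lt_or_ge i i0 with hlt | hge
      · have h1 : abv (p.coeff i) * r ^ i < A :=
          (le_gsn habv hr.le i).lt_of_ne (Nat.find_min hexp hlt)
        calc (abv (p.coeff i) * r ^ i) * (abv (q.coeff j) * r ^ j)
            ≤ (abv (p.coeff i) * r ^ i) * B :=
              mul_le_mul_of_nonneg_left (le_gsn habv hr.le j)
                (gsn_term_nonneg habv hr.le i)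
          _ < A * B := mul_lt_mul_of_pos_right h1 hB
      · have hjlt : j < j0 := by
          rcases Nat.lt_or_ge j j0 with h | h
          · exact h
          · exfalso
            have : i = i0 ∧ j = j0 := by omega
            exact hij1 (by rw [this.1, this.2])
        have h1 : abv (q.coeff j) * r ^ j < B :=
          (le_gsn habv hr.le j).lt_of_ne (Nat.find_min hexq hjlt)
        calc (abv (p.coeff i) * r ^ i) * (abv (q.coeff j) * r ^ j)
            ≤ A * (abv (q.coeff j) * r ^ j) :=
              mul_le_mul_of_nonneg_right (le_gsn habv hr.le i)
                (gsn_term_nonneg habv hr.le j)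
          _ < A * B := mul_lt_mul_of_pos_left h1 hA
    rw [ab_add_eq habv hrest, hmain]
  have h2 : A * B = abv ((p * q).coeff (i0 + j0)) * r ^ (i0 + j0) := by
    rw [key, div_mul_cancel₀ _ (pow_pos hr _).ne']
  rw [h2]
  exact le_gsn habv hr.le _

lemma gsn_comp_le {b : K} {r' : ℝ} (hb : abv b ≤ r) (hr' : 0 < r') (hr'r : r' ≤ r) :
    gsn abv (p.comp (X + C b)) r' ≤ gsn abv p r := by
  have hr : 0 < r := lt_of_lt_of_le hr' hr'r
  refine gsn_le habv (gsn_nonneg habv hr.le) fun i => ?_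
  have hd : (hasseDeriv i p).natDegree < p.natDegree + 1 :=
    lt_of_le_of_lt (natDegree_hasseDeriv_le p i) (by omega)
  have hco : (p.comp (X + C b)).coeff i
      = ∑ m ∈ Finset.range (p.natDegree + 1),
          (((m + i).choose i : K) * p.coeff (m + i)) * b ^ m := by
    rw [← taylor_apply, taylor_coeff, eval_eq_sum_range' hd b]
    exact Finset.sum_congr rfl fun m _ => by rw [hasseDeriv_coeff]
  rw [hco, ← le_div_iff₀ (pow_pos hr' i)]
  refine ab_sum_le habv _ _ (div_nonneg (gsn_nonneg habv hr.le)
    (pow_pos hr' i).le) fun m _ => ?_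
  rw [le_div_iff₀ (pow_pos hr' i), habv.2.2.1, habv.2.2.1, ab_pow habv]
  calc abv ((m + i).choose i : K) * abv (p.coeff (m + i)) * abv b ^ m * r' ^ i
      ≤ 1 * abv (p.coeff (m + i)) * r ^ m * r ^ i := by
        gcongr <;> first
          | exact ab_nat habv _
          | exact pow_le_pow_left₀ (habv.1 b) hb m
          | exact pow_le_pow_left₀ hr'.le hr'r i
          | exact habv.1 _
          | exact mul_nonneg (mul_nonneg zero_le_one (habv.1 _)) (pow_nonneg hr.le m)
          | exact mul_nonneg zero_le_one (habv.1 _)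
          | exact pow_nonneg (habv.1 b) m
    _ = abv (p.coeff (m + i)) * r ^ (m + i) := by rw [pow_add]; ring
    _ ≤ gsn abv p r := le_gsn habv hr.le _

end aux

theorem stmt1 {K : Type*} [Field K] (abv : K → ℝ) (habv : IsNonarchAbs abv)
    (a : ℕ → K) (r : ℕ → ℝ) (hrpos : ∀ n, 0 < r n)
    (hrdec : ∀ n, r (n + 1) < r n)
    (hnest : ∀ n, abv (a (n + 1) - a n) ≤ r n) :
    (∀ f : Polynomial K, Antitone fun n => gaussSN abv (a n) (r n) f) ∧
    (∀ f : Polynomial K,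
      Tendsto (fun n => gaussSN abv (a n) (r n) f) atTop
        (nhds (⨅ n, gaussSN abv (a n) (r n) f))) ∧
    IsMultSeminorm abv (fun f => ⨅ n, gaussSN abv (a n) (r n) f) := by
  have gauss_eq : ∀ (x : K) (ρ : ℝ) (f : Polynomial K),
      gaussSN abv x ρ f = gsn abv (f.comp (X + C x)) ρ := fun _ _ _ => rfl
  have hanti : ∀ f : Polynomial K, Antitone fun n => gaussSN abv (a n) (r n) f := by
    intro f
    refine antitone_nat_of_succ_le fun n => ?_
    show gaussSN abv (a (n + 1)) (r (n + 1)) f ≤ gaussSN abv (a n) (r n) f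
    rw [gauss_eq, gauss_eq]
    have hcomp : f.comp (X + C (a (n + 1)))
        = (f.comp (X + C (a n))).comp (X + C (a (n + 1) - a n)) := by
      rw [comp_assoc]
      congr 1
      rw [add_comp, X_comp, C_comp, add_assoc, ← C_add, sub_add_cancel]
    rw [hcomp]
    exact gsn_comp_le habv (hnest n) (hrpos (n + 1)) (hrdec n).le
  have hbdd : ∀ f : Polynomial K,
      BddBelow (Set.range fun n => gaussSN abv (a n) (r n) f) :=
    fun f => ⟨0, by rintro x ⟨n, rfl⟩; exact gsn_nonneg habv (hrpos n).le⟩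
  have htend : ∀ f : Polynomial K,
      Tendsto (fun n => gaussSN abv (a n) (r n) f) atTop
        (nhds (⨅ n, gaussSN abv (a n) (r n) f)) :=
    fun f => tendsto_atTop_ciInf (hanti f) (hbdd f)
  refine ⟨hanti, htend, ?_, ?_, ?_, ?_⟩
  · intro f
    exact le_ciInf fun n => gsn_nonneg habv (hrpos n).le
  · intro c
    have hc : ∀ n, gaussSN abv (a n) (r n) (C c) = abv c := by
      intro n
      rw [gauss_eq, C_comp]
      exact gsn_C habv (hrpos n).le c
    simp only [hc, ciInf_const]
  · intro f g
    refine le_of_tendsto_of_tendsto' (htend (f + g)) ((htend f).add (htend g))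
      fun n => ?_
    rw [gauss_eq, gauss_eq, gauss_eq, add_comp]
    exact le_trans (gsn_add_le habv (hrpos n).le)
      (max_le_add_of_nonneg (gsn_nonneg habv (hrpos n).le)
        (gsn_nonneg habv (hrpos n).le))
  · intro f g
    have h3 : Tendsto (fun n => gaussSN abv (a n) (r n) f * gaussSN abv (a n) (r n) g)
        atTop (nhds (⨅ n, gaussSN abv (a n) (r n) (f * g))) :=
      (htend (f * g)).congr fun n => by
      rw [gauss_eq, gauss_eq, gauss_eq, mul_comp]
      exact gsn_mul habv (hrpos n)
    exact tendsto_nhds_unique h3 ((htend f).mul (htend g))
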